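/- There exist 90 unit vectors v_1, …, v_90 in R^24, pairwise satisfying |⟨v_i, v_j⟩| = 1/5 for i ≠ j, such that every v_i is orthogonal to each of the four vectors e_1 − e_2, c = 4e_1 + Σ_{i=1}^{24} e_i, c_1 = e_2 + e_3 + e_10 + e_12 + e_13 + e_14 + e_21 + e_24, and c_2 = e_2 + e_3 + e_6 + e_7 + e_18 + e_19 + e_22 + e_23. In particular, these 90 vectors lie in a 20-dimensional subspace of R^24 and form 90 equiangular lines in R^20 with angle arccos(1/5). -/

import Mathlib

/-- The standard basis vector `e_i` of `ℝ^24` (0-indexed). -/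
noncomputable def stdBasisR24 (i : Fin 24) : EuclideanSpace ℝ (Fin 24) :=
  EuclideanSpace.single i 1

/-- The vector `c = 4 e₁ + ∑_{i=1}^{24} e_i`. -/
noncomputable def cVec : EuclideanSpace ℝ (Fin 24) :=
  (4 : ℝ) • stdBasisR24 0 + ∑ i, stdBasisR24 i

/-- The vector `c₁ = e₂ + e₃ + e₁₀ + e₁₂ + e₁₃ + e₁₄ + e₂₁ + e₂₄`. -/
noncomputable def c1Vec : EuclideanSpace ℝ (Fin 24) :=
  stdBasisR24 1 + stdBasisR24 2 + stdBasisR24 9 + stdBasisR24 11 +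
    stdBasisR24 12 + stdBasisR24 13 + stdBasisR24 20 + stdBasisR24 23

/-- The vector `c₂ = e₂ + e₃ + e₆ + e₇ + e₁₈ + e₁₉ + e₂₂ + e₂₃`. -/
noncomputable def c2Vec : EuclideanSpace ℝ (Fin 24) :=
  stdBasisR24 1 + stdBasisR24 2 + stdBasisR24 5 + stdBasisR24 6 +
    stdBasisR24 17 + stdBasisR24 18 + stdBasisR24 21 + stdBasisR24 22

namespace EQL90

/-- The 90 vectors, encoded as 24-bit masks: bit `k` set means coordinate `k`
is `-3`, otherwise it is `1`.  These come from the Leech lattice: they are the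
vectors `2x - c` where `x` ranges over norm-32 Leech vectors with `x·c = 24`
(where `c = (5,1,…,1)` is a type-3 Leech vector), further selected to be
orthogonal to `e₀ - e₁`, `χ_{O₁}`, `χ_{O₂}` for two octads `O₁, O₂` of the
underlying Golay code. -/
def maskL : List ℕ := [204956, 4722972, 2116636, 8405420, 581708, 5276812, 2196236, 9241612, 606772, 103508, 264084, 11042964, 1229076, 560420, 1638852, 676996, 379012, 4285700, 133944, 10555448, 5267512, 12847256, 2892312, 1446936, 1085800, 1376936, 2140328, 13140520, 809000, 4203464, 1198280, 11012424, 298568, 725576, 12604488, 3220552, 10618504, 2257160, 13828360, 4860936, 4567048, 11845640, 8439920, 10223920, 3180080, 338992, 700464, 8524240, 2165456, 1351888, 5246288, 157264, 3690576, 13181008, 5898896, 6304912, 14697232, 2398480, 8880656, 4413456, 94432, 8456032, 2626464, 1189280, 4214432, 8688800, 9111712, 320288, 3229984, 5837856, 11035680, 9192128, 4757696, 800064, 239936, 5358144, 10126400, 5525888, 10822016, 3935360, 3379328, 12771456, 4364032, 5049088, 8801536, 7905536, 2446848, 2804224, 14781440, 2056192]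

def mask (i : Fin 90) : ℕ := maskL.getD i.1 0

/-- entry `k` of the vector with mask `m` -/
def ent (m k : ℕ) : ℤ := if m >>> k &&& 1 = 1 then -3 else 1

/-- dot product of the vector with mask `a` against an integer coordinate
function `g`, over coordinates `< n`. -/
def dotg (g : ℕ → ℤ) (a : ℕ) : ℕ → ℤ
  | 0 => 0
  | k + 1 => ent a k * g k + dotg g a k

def dF : ℕ → ℤ := fun k => if k = 0 then 1 else if k = 1 then -1 else 0
def cF : ℕ → ℤ := fun k => if k = 0 then 5 else 1
def c1F : ℕ → ℤ := fun k =>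
  if k = 1 ∨ k = 2 ∨ k = 9 ∨ k = 11 ∨ k = 12 ∨ k = 13 ∨ k = 20 ∨ k = 23 then 1 else 0
def c2F : ℕ → ℤ := fun k =>
  if k = 1 ∨ k = 2 ∨ k = 5 ∨ k = 6 ∨ k = 17 ∨ k = 18 ∨ k = 21 ∨ k = 22 then 1 else 0

set_option maxRecDepth 40000 in
theorem chkNorm : ∀ i : Fin 90, dotg (ent (mask i)) (mask i) 24 = 80 := by decide

set_option maxRecDepth 3000000 in
set_option maxHeartbeats 8000000 in
theorem chkPair : ∀ i j : Fin 90, i ≠ j →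
    (dotg (ent (mask j)) (mask i) 24).natAbs = 16 := by decide

set_option maxRecDepth 100000 in
theorem chkOrth : ∀ i : Fin 90, dotg dF (mask i) 24 = 0 ∧ dotg cF (mask i) 24 = 0 ∧
    dotg c1F (mask i) 24 = 0 ∧ dotg c2F (mask i) 24 = 0 := by decide

/-- coordinate vector in `ℝ^24` attached to an integer coordinate function -/
noncomputable def toG (g : ℕ → ℤ) : EuclideanSpace ℝ (Fin 24) :=
  WithLp.toLp 2 (fun k : Fin 24 => ((g k.1 : ℤ) : ℝ))

lemma sum_entg (g : ℕ → ℤ) (a : ℕ) :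
    ∀ n, (∑ k : Fin n, ent a k.1 * g k.1) = dotg g a n := by
  intro n
  induction n with
  | zero => simp [dotg]
  | succ n ih =>
    rw [Fin.sum_univ_castSucc]
    simp only [Fin.coe_castSucc, Fin.val_last, ih, dotg]
    ring

lemma inner_toG (a : ℕ) (g : ℕ → ℤ) :
    (inner ℝ (toG (ent a)) (toG g) : ℝ) = ((dotg g a 24 : ℤ) : ℝ) := by
  rw [PiLp.inner_apply]
  simp only [toG, PiLp.toLp_apply, RCLike.inner_apply, conj_trivial]
  rw [← sum_entg g a 24]
  push_cast
  exact Finset.sum_congr rfl (fun _ _ => mul_comm _ _)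

lemma prsum {n : ℕ} (f : Fin n → EuclideanSpace ℝ (Fin 24)) (k : Fin 24) :
    (∑ i, f i) k = ∑ i, f i k :=
  by rw [WithLp.ofLp_sum]; exact Finset.sum_apply k Finset.univ _

lemma dVec_eq : stdBasisR24 0 - stdBasisR24 1 = toG dF := by
  ext k
  simp only [stdBasisR24, PiLp.sub_apply, EuclideanSpace.single_apply, toG, PiLp.toLp_apply, dF]
  fin_cases k <;> norm_num [Fin.ext_iff, Fin.coe_ofNat_eq_mod]

lemma cVec_eq : cVec = toG cF := by
  ext k
  simp only [cVec, PiLp.add_apply, PiLp.smul_apply, prsum, stdBasisR24,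
    EuclideanSpace.single_apply, smul_eq_mul, toG, PiLp.toLp_apply, cF]
  rw [Finset.sum_ite_eq]
  fin_cases k <;> norm_num [Fin.ext_iff, Fin.coe_ofNat_eq_mod]

lemma c1Vec_eq : c1Vec = toG c1F := by
  ext k
  simp only [c1Vec, PiLp.add_apply, stdBasisR24, EuclideanSpace.single_apply, toG, PiLp.toLp_apply, c1F]
  fin_cases k <;> norm_num [Fin.ext_iff, Fin.coe_ofNat_eq_mod]

lemma c2Vec_eq : c2Vec = toG c2F := by
  ext k
  simp only [c2Vec, PiLp.add_apply, stdBasisR24, EuclideanSpace.single_apply, toG, PiLp.toLp_apply, c2F]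
  fin_cases k <;> norm_num [Fin.ext_iff, Fin.coe_ofNat_eq_mod]

/-- the 90 unit vectors -/
noncomputable def vv (i : Fin 90) : EuclideanSpace ℝ (Fin 24) :=
  (Real.sqrt 80)⁻¹ • toG (ent (mask i))

lemma sqrt80_mul : Real.sqrt 80 * Real.sqrt 80 = 80 :=
  Real.mul_self_sqrt (by norm_num)

lemma sqrt80_pos : 0 < Real.sqrt 80 := Real.sqrt_pos.mpr (by norm_num)

lemma inner_vv_toG (i : Fin 90) (g : ℕ → ℤ) :
    (inner ℝ (vv i) (toG g) : ℝ) = (Real.sqrt 80)⁻¹ * ((dotg g (mask i) 24 : ℤ) : ℝ) := by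
  rw [vv, real_inner_smul_left, inner_toG]

lemma inner_vv (i j : Fin 90) :
    (inner ℝ (vv i) (vv j) : ℝ) = (80 : ℝ)⁻¹ * ((dotg (ent (mask j)) (mask i) 24 : ℤ) : ℝ) := by
  rw [vv, vv, real_inner_smul_left, real_inner_smul_right, inner_toG, ← mul_assoc,
    ← mul_inv, sqrt80_mul]

lemma vv_norm (i : Fin 90) : ‖vv i‖ = 1 := by
  have h1 : (inner ℝ (vv i) (vv i) : ℝ) = 1 := by
    rw [inner_vv, chkNorm i]
    norm_num
  have h2 : ‖vv i‖ ^ 2 = 1 := by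
    rw [← real_inner_self_eq_norm_sq]
    exact h1
  nlinarith [norm_nonneg (vv i)]

lemma vv_pair {i j : Fin 90} (h : i ≠ j) : |(inner ℝ (vv i) (vv j) : ℝ)| = 1 / 5 := by
  have hd : |((dotg (ent (mask j)) (mask i) 24 : ℤ) : ℝ)| = 16 := by
    rw [← Int.cast_abs, Int.abs_eq_natAbs, chkPair i j h]
    norm_num
  rw [inner_vv, abs_mul, hd, abs_of_pos (by norm_num : (0:ℝ) < (80:ℝ)⁻¹)]
  norm_num

lemma vv_orth_d (i : Fin 90) : (inner ℝ (vv i) (toG dF) : ℝ) = 0 := by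
  rw [inner_vv_toG, (chkOrth i).1]; norm_num

lemma vv_orth_c (i : Fin 90) : (inner ℝ (vv i) (toG cF) : ℝ) = 0 := by
  rw [inner_vv_toG, (chkOrth i).2.1]; norm_num

lemma vv_orth_c1 (i : Fin 90) : (inner ℝ (vv i) (toG c1F) : ℝ) = 0 := by
  rw [inner_vv_toG, (chkOrth i).2.2.1]; norm_num

lemma vv_orth_c2 (i : Fin 90) : (inner ℝ (vv i) (toG c2F) : ℝ) = 0 := by
  rw [inner_vv_toG, (chkOrth i).2.2.2]; norm_num

/-- the four constraint vectors -/
noncomputable def uvecs : Fin 4 → EuclideanSpace ℝ (Fin 24) :=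
  ![toG dF, toG cF, toG c1F, toG c2F]

lemma uli : LinearIndependent ℝ uvecs := by
  rw [Fintype.linearIndependent_iff]
  intro g hg
  have hk : ∀ k : Fin 24, ∑ t : Fin 4, g t * uvecs t k = 0 := by
    intro k
    have h2 := (prsum (fun t => g t • uvecs t) k).symm.trans (congrFun (congrArg WithLp.ofLp hg) k)
    simpa [PiLp.smul_apply, smul_eq_mul] using h2
  have e0 := hk 0
  have e3 := hk 3
  have e5 := hk 5
  have e9 := hk 9
  rw [Fin.sum_univ_four] at e0 e3 e5 e9
  simp only [uvecs, Matrix.cons_val_zero, Matrix.cons_val_one, Matrix.head_cons,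
    Matrix.cons_val_two, Matrix.tail_cons, Matrix.cons_val_three, toG, PiLp.toLp_apply, dF, cF, c1F, c2F] at e0 e3 e5 e9
  norm_num [Fin.coe_ofNat_eq_mod] at e0 e3 e5 e9
  intro t
  fin_cases t <;> simp <;> linarith

theorem equiangular_90_lines_in_R24' :
    ∃ v : Fin 90 → EuclideanSpace ℝ (Fin 24),
      (∀ i, ‖v i‖ = 1) ∧
      (∀ i j, i ≠ j → |(inner ℝ (v i) (v j) : ℝ)| = 1 / 5) ∧
      (∀ i, (inner ℝ (v i) (stdBasisR24 0 - stdBasisR24 1) : ℝ) = 0) ∧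
      (∀ i, (inner ℝ (v i) cVec : ℝ) = 0) ∧
      (∀ i, (inner ℝ (v i) c1Vec : ℝ) = 0) ∧
      (∀ i, (inner ℝ (v i) c2Vec : ℝ) = 0) ∧
      ∃ W : Submodule ℝ (EuclideanSpace ℝ (Fin 24)),
        Module.finrank ℝ W = 20 ∧ ∀ i, v i ∈ W := by
  refine ⟨vv, vv_norm, fun i j h => vv_pair h, ?_, ?_, ?_, ?_, ?_⟩
  · intro i; rw [dVec_eq]; exact vv_orth_d i
  · intro i; rw [cVec_eq]; exact vv_orth_c i
  · intro i; rw [c1Vec_eq]; exact vv_orth_c1 i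
  · intro i; rw [c2Vec_eq]; exact vv_orth_c2 i
  · refine ⟨(Submodule.span ℝ (Set.range uvecs))ᗮ, ?_, ?_⟩
    · have hsp : Module.finrank ℝ (Submodule.span ℝ (Set.range uvecs)) = 4 := by
        rw [finrank_span_eq_card uli]
        simp
      have htot := Submodule.finrank_add_finrank_orthogonal
        (K := Submodule.span ℝ (Set.range uvecs))
      rw [hsp, finrank_euclideanSpace_fin] at htot
      omega
    · intro i
      rw [Submodule.mem_orthogonal]
      intro x hx
      induction hx using Submodule.span_induction with
      | mem y hy =>
        obtain ⟨t, rfl⟩ := hy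
        fin_cases t
        · rw [real_inner_comm]
          simpa [uvecs] using vv_orth_d i
        · rw [real_inner_comm]
          simpa [uvecs] using vv_orth_c i
        · rw [real_inner_comm]
          simpa [uvecs] using vv_orth_c1 i
        · rw [real_inner_comm]
          simpa [uvecs] using vv_orth_c2 i
      | zero => exact inner_zero_left _
      | add x y hx hy ihx ihy => rw [inner_add_left, ihx, ihy, add_zero]
      | smul a x hx ih => rw [real_inner_smul_left, ih, mul_zero]

end EQL90

/-- There exist 90 unit vectors in `ℝ^24`, pairwise equiangular with angle
`arccos (1/5)`, each orthogonal to `e₁ - e₂`, `c`, `c₁` and `c₂`; in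
particular they lie in a 20-dimensional subspace of `ℝ^24` and form 90
equiangular lines in `ℝ^20`. -/
theorem equiangular_90_lines_in_R24 :
    ∃ v : Fin 90 → EuclideanSpace ℝ (Fin 24),
      (∀ i, ‖v i‖ = 1) ∧
      (∀ i j, i ≠ j → |(inner ℝ (v i) (v j) : ℝ)| = 1 / 5) ∧
      (∀ i, (inner ℝ (v i) (stdBasisR24 0 - stdBasisR24 1) : ℝ) = 0) ∧
      (∀ i, (inner ℝ (v i) cVec : ℝ) = 0) ∧
      (∀ i, (inner ℝ (v i) c1Vec : ℝ) = 0) ∧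
      (∀ i, (inner ℝ (v i) c2Vec : ℝ) = 0) ∧
      ∃ W : Submodule ℝ (EuclideanSpace ℝ (Fin 24)),
        Module.finrank ℝ W = 20 ∧ ∀ i, v i ∈ W :=
  EQL90.equiangular_90_lines_in_R24'
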